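/- For integers n ≥ 1, d ≥ 1, the number of vectors in (Z/pZ)^n of Lee weight at most d is at most exp_2((2n + d) · h_2(d/(2n+d))), where h_2 is the binary entropy function. In particular, if d = δn for fixed δ > 0, then (1/n) log_p N(p, n, δn) ≤ (2 + δ) h_p(δ/(2 + δ)), where h_p(y) = -y log_p y - (1-y) log_p(1-y). -/

import Mathlib

/-- Lee weight of an element of `ZMod p`. -/
def leeWt (p : ℕ) (x : ZMod p) : ℕ := min x.val (p - x.val)

/-- Lee weight of a vector. -/
def leeWtV (p n : ℕ) (x : Fin n → ZMod p) : ℕ := ∑ i, leeWt p (x i)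

/-- `N(p,n,d)`: the number of vectors in `(ZMod p)^n` of Lee weight at most `d`. -/
noncomputable def NLee (p n d : ℕ) : ℕ :=
  Nat.card {x : Fin n → ZMod p // leeWtV p n x ≤ d}

/-- `b`-ary entropy function (with value `0` at `y = 0, 1`). -/
noncomputable def bEnt (b y : ℝ) : ℝ :=
  -(y * Real.logb b y) - (1 - y) * Real.logb b (1 - y)

lemma NLee_le_choose (p n d : ℕ) (hp : 2 ≤ p) :
    NLee p n d ≤ (2 * n + d).choose d := by
  haveI : NeZero p := ⟨by omega⟩
  set A := {x : Fin n → ZMod p // leeWtV p n x ≤ d} with hA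
  let a : (Fin n → ZMod p) → Fin n → ℕ := fun x i =>
    if 2 * (x i).val ≤ p then (x i).val else 0
  let b : (Fin n → ZMod p) → Fin n → ℕ := fun x i =>
    if 2 * (x i).val ≤ p then 0 else p - (x i).val
  have hab : ∀ (x : Fin n → ZMod p) (i : Fin n), a x i + b x i = leeWt p (x i) := by
    intro x i
    have hv : (x i).val < p := ZMod.val_lt _
    simp only [a, b, leeWt]
    split <;> omega
  let M : A → Multiset (Option (Fin n × Bool)) := fun x =>
    Multiset.replicate (d - leeWtV p n x.1) none +
      ∑ i : Fin n, (Multiset.replicate (a x.1 i) (some (i, false)) +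
        Multiset.replicate (b x.1 i) (some (i, true)))
  have hcard : ∀ x : A, Multiset.card (M x) = d := by
    intro x
    simp only [M, Multiset.card_add, Multiset.card_replicate, map_sum]
    have hsum : ∑ i : Fin n, (a x.1 i + b x.1 i) = leeWtV p n x.1 := by
      simp only [leeWtV]
      exact Finset.sum_congr rfl fun i _ => hab x.1 i
    rw [show (∑ i : Fin n, (Multiset.replicate (a x.1 i) (some (i, false)) +
        Multiset.replicate (b x.1 i) (some (i, true)))).card = ∑ i : Fin n, (a x.1 i + b x.1 i) from
      (map_sum (Multiset.cardHom (α := Option (Fin n × Bool))) _ _).trans (by simp [Multiset.cardHom])]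
    rw [hsum]
    have := x.2
    omega
  have hcnt : ∀ (x : A) (i : Fin n),
      (M x).count (some (i, false)) = a x.1 i ∧ (M x).count (some (i, true)) = b x.1 i := by
    intro x i
    constructor <;>
    · simp only [M, Multiset.count_add, Multiset.count_replicate, Multiset.count_sum',
        Finset.sum_add_distrib, Finset.sum_ite_eq']
      simp
  let f : A → Sym (Option (Fin n × Bool)) d := fun x => ⟨M x, hcard x⟩
  have hf : Function.Injective f := by
    intro x y hxy
    have hMeq : M x = M y := congrArg Subtype.val hxy
    have hvals : ∀ i : Fin n, (x.1 i).val = (y.1 i).val := by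
      intro i
      have h1 : a x.1 i = a y.1 i := by
        rw [← (hcnt x i).1, ← (hcnt y i).1, hMeq]
      have h2 : b x.1 i = b y.1 i := by
        rw [← (hcnt x i).2, ← (hcnt y i).2, hMeq]
      have hvx : (x.1 i).val < p := ZMod.val_lt _
      have hvy : (y.1 i).val < p := ZMod.val_lt _
      simp only [a, b] at h1 h2
      split_ifs at h1 h2 <;> omega
    apply Subtype.ext
    funext i
    exact ZMod.val_injective p (hvals i)
  calc NLee p n d ≤ Nat.card (Sym (Option (Fin n × Bool)) d) :=
        Nat.card_le_card_of_injective f hf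
    _ = (2 * n + d).choose d := by
        rw [Nat.card_eq_fintype_card, Sym.card_sym_eq_choose]
        congr 1
        simp [Fintype.card_option, Fintype.card_prod]
        omega

lemma choose_le_rpow_ent (m k : ℕ) (h0 : 0 < k) (hk : k < m) :
    (m.choose k : ℝ) ≤ 2 ^ ((m : ℝ) * bEnt 2 ((k : ℝ) / m)) := by
  have hm : (0:ℝ) < m := by exact_mod_cast h0.trans hk
  set y : ℝ := (k : ℝ) / m with hy
  have hy0 : 0 < y := by positivity
  have hy1 : y < 1 := by
    rw [hy, div_lt_one hm]; exact_mod_cast hk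
  have h1y : 0 < 1 - y := by linarith
  have key : (m.choose k : ℝ) * (y ^ k * (1 - y) ^ (m - k)) ≤ 1 := by
    have hexp := add_pow y (1 - y) m
    have h1 : (y + (1 - y)) ^ m = 1 := by norm_num
    rw [h1] at hexp
    have hmem : k ∈ Finset.range (m + 1) := Finset.mem_range.mpr (by omega)
    have := Finset.single_le_sum
      (f := fun i => y ^ i * (1 - y) ^ (m - i) * (m.choose i : ℝ))
      (fun i _ => by positivity) hmem
    rw [← hexp] at this
    calc (m.choose k : ℝ) * (y ^ k * (1 - y) ^ (m - k))
        = y ^ k * (1 - y) ^ (m - k) * (m.choose k : ℝ) := by ring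
      _ ≤ 1 := this
  have hmy : (m : ℝ) * y = k := by rw [hy]; field_simp
  have hm1y : (m : ℝ) * (1 - y) = ((m - k : ℕ) : ℝ) := by
    rw [hy, Nat.cast_sub hk.le]
    field_simp
  have hrhs : (2:ℝ) ^ ((m : ℝ) * bEnt 2 y) = (y ^ k * (1 - y) ^ (m - k))⁻¹ := by
    have hexp : (m : ℝ) * bEnt 2 y =
        Real.logb 2 y * (-(k : ℝ)) + Real.logb 2 (1 - y) * (-((m - k : ℕ) : ℝ)) := by
      rw [bEnt]
      rw [mul_sub, mul_neg, ← mul_assoc, ← mul_assoc, hmy, hm1y]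
      ring
    rw [hexp, Real.rpow_add two_pos, Real.rpow_mul (by norm_num), Real.rpow_mul (by norm_num),
      Real.rpow_logb two_pos (by norm_num) hy0, Real.rpow_logb two_pos (by norm_num) h1y,
      Real.rpow_neg hy0.le, Real.rpow_neg h1y.le, Real.rpow_natCast, Real.rpow_natCast,
      mul_inv]
  rw [hrhs, ← one_div, le_div_iff₀ (by positivity)]
  linarith [key]

lemma NLee_pos (p n d : ℕ) (hp : 2 ≤ p) : 1 ≤ NLee p n d := by
  haveI : NeZero p := ⟨by omega⟩
  have hne : Nonempty {x : Fin n → ZMod p // leeWtV p n x ≤ d} := by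
    refine ⟨⟨0, ?_⟩⟩
    simp [leeWtV, leeWt, ZMod.val_zero]
  exact Nat.one_le_iff_ne_zero.mpr (Nat.card_pos).ne'

theorem stmt15 (p n d : ℕ) (hp : 2 ≤ p) (hn : 1 ≤ n) (hd : 1 ≤ d) :
    (NLee p n d : ℝ) ≤ 2 ^ ((2 * n + d : ℝ) * bEnt 2 ((d : ℝ) / (2 * n + d))) ∧
    ∀ δ : ℝ, 0 < δ → (d : ℝ) = δ * n →
      (1 / (n : ℝ)) * Real.logb p (NLee p n d) ≤
        (2 + δ) * bEnt p (δ / (2 + δ)) := by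
  have part1 : (NLee p n d : ℝ) ≤ 2 ^ ((2 * n + d : ℝ) * bEnt 2 ((d : ℝ) / (2 * n + d))) := by
    have h1 : (NLee p n d : ℝ) ≤ ((2 * n + d).choose d : ℝ) := by
      exact_mod_cast NLee_le_choose p n d hp
    have h2 := choose_le_rpow_ent (2 * n + d) d hd (by omega)
    push_cast at h2
    exact h1.trans h2
  refine ⟨part1, ?_⟩
  intro δ hδ hdn
  have hNL := NLee_pos p n d hp
  have hn' : (0:ℝ) < n := by exact_mod_cast hn
  have hp1 : (1:ℝ) < p := by exact_mod_cast hp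
  have hlogp : 0 < Real.log p := Real.log_pos hp1
  have hlog2 : Real.log 2 ≠ 0 := by positivity
  set T : ℝ := (2 * n + d : ℝ) * bEnt 2 ((d : ℝ) / (2 * n + d)) with hT
  have h1 : Real.logb p (NLee p n d) ≤ Real.logb p ((2:ℝ) ^ T) :=
    Real.logb_le_logb_of_le hp1 (by exact_mod_cast hNL) part1
  have h2 : Real.logb p ((2:ℝ) ^ T) = T * Real.logb p 2 := by
    rw [Real.logb, Real.logb, Real.log_rpow two_pos]; ring
  have hm' : (2 * (n:ℝ) + d) = (2 + δ) * n := by rw [hdn]; ring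
  have hyy : (d : ℝ) / (2 * n + d) = δ / (2 + δ) := by
    rw [hdn]
    rw [show 2 * (n:ℝ) + δ * n = (2 + δ) * n by ring]
    rw [mul_comm δ (n:ℝ), mul_comm (2 + δ) (n:ℝ), mul_div_mul_left _ _ hn'.ne']
  have h3 : bEnt 2 (δ / (2 + δ)) * Real.logb p 2 = bEnt p (δ / (2 + δ)) := by
    simp only [bEnt, Real.logb]
    field_simp
  have h4 : (1 / (n:ℝ)) * (T * Real.logb p 2) = (2 + δ) * bEnt p (δ / (2 + δ)) := by
    rw [hT, hyy, hm']
    field_simp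
    rw [← h3]
  calc (1 / (n : ℝ)) * Real.logb p (NLee p n d)
      ≤ (1 / (n:ℝ)) * (T * Real.logb p 2) := by
        apply mul_le_mul_of_nonneg_left (h2 ▸ h1) (by positivity)
    _ = (2 + δ) * bEnt p (δ / (2 + δ)) := h4
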